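/- Let q = 1/2 and let p ∈ Δ_2 with p_1 = p_2. Then G^n(p) converges to (0, 0, 1) as n → ∞. -/
import Mathlib


open Filter Topology

/-- The map G = (G₁,G₂,G₃) on ℝ³ (with parameter q):
G₁(x) = x₁² + 2q x₁ x₃, G₂(x) = x₂² + 2q x₂ x₃,
G₃(x) = x₃² + 2 x₁ x₂ + 2(1−q) x₁ x₃ + 2(1−q) x₂ x₃. -/
noncomputable def Gmap (q : ℝ) (x : ℝ × ℝ × ℝ) : ℝ × ℝ × ℝ :=
  (x.1 ^ 2 + 2 * q * x.1 * x.2.2,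
   x.2.1 ^ 2 + 2 * q * x.2.1 * x.2.2,
   x.2.2 ^ 2 + 2 * x.1 * x.2.1 + 2 * (1 - q) * x.1 * x.2.2
     + 2 * (1 - q) * x.2.1 * x.2.2)

/-- The open simplex Δ₂ ⊆ ℝ³. -/
def simplex2 : Set (ℝ × ℝ × ℝ) :=
  {p | p.1 + p.2.1 + p.2.2 = 1 ∧ 0 < p.1 ∧ 0 < p.2.1 ∧ 0 < p.2.2}

/-- The logistic map. -/
noncomputable def logi (a : ℝ) : ℝ := a * (1 - a)

lemma Gmap_diag (a : ℝ) :
    Gmap (1 / 2) (a, a, 1 - 2 * a) = (logi a, logi a, 1 - 2 * logi a) := by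
  simp only [Gmap, logi, Prod.mk.injEq]
  refine ⟨by ring, by ring, by ring⟩

lemma Gmap_diag_iter (a : ℝ) (n : ℕ) :
    (Gmap (1 / 2))^[n] (a, a, 1 - 2 * a) = (logi^[n] a, logi^[n] a, 1 - 2 * logi^[n] a) := by
  induction n with
  | zero => simp
  | succ n ih =>
      rw [Function.iterate_succ_apply', ih, Gmap_diag, Function.iterate_succ_apply']

lemma logi_pos_lt_one {a : ℝ} (h0 : 0 < a) (h1 : a < 1) :
    0 < logi a ∧ logi a < 1 := by
  refine ⟨mul_pos h0 (by linarith), ?_⟩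
  unfold logi
  nlinarith

lemma logi_iter_mem {a : ℝ} (h0 : 0 < a) (h1 : a < 1) (n : ℕ) :
    0 < logi^[n] a ∧ logi^[n] a < 1 := by
  induction n with
  | zero => exact ⟨h0, h1⟩
  | succ n ih =>
      rw [Function.iterate_succ_apply']
      exact logi_pos_lt_one ih.1 ih.2

lemma logi_iter_bound {a : ℝ} (h0 : 0 < a) (h1 : a < 1) (n : ℕ) :
    1 / a + n ≤ 1 / logi^[n] a := by
  induction n with
  | zero => simp
  | succ n ih =>
      have hm := logi_iter_mem h0 h1 n
      set b := logi^[n] a with hb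
      have hb0 : 0 < b := hm.1
      have hb1 : b < 1 := hm.2
      rw [Function.iterate_succ_apply', ← hb]
      have hlb : 0 < 1 - b := by linarith
      have key : 1 / b + 1 ≤ 1 / logi b := by
        rw [logi, le_div_iff₀ (mul_pos hb0 hlb)]
        have heq : (1 / b + 1) * (b * (1 - b)) = 1 - b ^ 2 := by
          field_simp; ring
        rw [heq]; nlinarith
      push_cast
      linarith
  
lemma logi_iter_tendsto {a : ℝ} (h0 : 0 < a) (h1 : a < 1) :
    Tendsto (fun n => logi^[n] a) atTop (𝓝 0) := by
  have hupper : ∀ n : ℕ, logi^[n] a ≤ 1 / (1 / a + n) := by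
    intro n
    have hm := logi_iter_mem h0 h1 n
    have hb := logi_iter_bound h0 h1 n
    have hd : 0 < 1 / a + (n : ℝ) := by positivity
    rw [le_div_iff₀ hd]
    calc logi^[n] a * (1 / a + n) ≤ logi^[n] a * (1 / logi^[n] a) :=
          mul_le_mul_of_nonneg_left hb hm.1.le
      _ = 1 := by rw [mul_one_div, div_self hm.1.ne']
  have hlow : ∀ n : ℕ, 0 ≤ logi^[n] a := fun n => (logi_iter_mem h0 h1 n).1.le
  have htend : Tendsto (fun n : ℕ => 1 / (1 / a + n)) atTop (𝓝 0) := by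
    simp only [one_div]
    apply Tendsto.comp tendsto_inv_atTop_zero
    apply tendsto_atTop_add_const_left
    exact tendsto_natCast_atTop_atTop
  exact squeeze_zero hlow hupper htend

/-- If q = 1/2 and p₁ = p₂, then G^n(p) → (0,0,1). -/
theorem tendsto_critical_diagonal (p : ℝ × ℝ × ℝ) (hp : p ∈ simplex2)
    (h12 : p.1 = p.2.1) :
    Tendsto (fun n => (Gmap (1 / 2))^[n] p) atTop
      (𝓝 ((0 : ℝ), (0 : ℝ), (1 : ℝ))) := by
  obtain ⟨hsum, h1, h2, h3⟩ := hp
  set a := p.1 with ha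
  have hp' : p = (a, a, 1 - 2 * a) := by
    have : p.2.2 = 1 - 2 * a := by rw [ha]; linarith [hsum, h12]
    rw [Prod.ext_iff, Prod.ext_iff]
    exact ⟨rfl, h12.symm, this⟩
  have h0a : 0 < a := h1
  have h1a : a < 1 := by
    have : p.2.2 = 1 - 2 * a := by rw [ha]; linarith [hsum, h12]
    nlinarith [h3, this]
  have htend := logi_iter_tendsto h0a h1a
  rw [hp']
  simp only [Gmap_diag_iter]
  have h3' : Tendsto (fun n => 1 - 2 * logi^[n] a) atTop (𝓝 1) := by
    have := (tendsto_const_nhds (x := (1:ℝ)) (f := atTop (α := ℕ))).sub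
      (htend.const_mul 2)
    simpa using this
  exact htend.prodMk_nhds (htend.prodMk_nhds h3')
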